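/- Let V and W be finite dimensional vector spaces over a field K, and let π_W : V ⊕ W → W be the projection. The map from the Grassmannian of r-dimensional subspaces of V ⊕ W to the disjoint union over s + t = r of Gr(s, V) × Gr(t, W), sending U to (U ∩ V, π_W(U)), is surjective, and the fibre over a pair (A, B) is in bijection with Hom_K(B, W/A). -/

import Mathlib

open Module

private lemma finrank_comap_add_map_aux {K V W : Type} [Field K]
    [AddCommGroup V] [Module K V] [AddCommGroup W] [Module K W]
    [FiniteDimensional K V] [FiniteDimensional K W] (U : Submodule K (V × W)) :
    finrank K (U.comap (LinearMap.inl K V W)) + finrank K (U.map (LinearMap.snd K V W)) =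
      finrank K U := by
  classical
  set φ : U →ₗ[K] W := (LinearMap.snd K V W).comp U.subtype with hφ
  have hrange : LinearMap.range φ = U.map (LinearMap.snd K V W) := by
    ext w
    simp only [LinearMap.mem_range, Submodule.mem_map, hφ, LinearMap.comp_apply,
      Submodule.subtype_apply, LinearMap.snd_apply]
    constructor
    · rintro ⟨⟨u, hu⟩, rfl⟩; exact ⟨u, hu, rfl⟩
    · rintro ⟨u, hu, rfl⟩; exact ⟨⟨u, hu⟩, rfl⟩
  have e : (U.comap (LinearMap.inl K V W)) ≃ₗ[K] LinearMap.ker φ :=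
    { toFun := fun v => ⟨⟨((v : V), 0), v.2⟩, by simp [hφ]⟩
      invFun := fun u => ⟨(u : U).1.1, by
        have h2 : ((u : U) : V × W).2 = 0 := u.2
        have hm : (((u : U) : V × W).1, (0 : W)) ∈ U := by
          rw [← h2]; exact (u : U).2
        simpa [Submodule.mem_comap] using hm⟩
      left_inv := fun v => rfl
      right_inv := fun u => by
        have h2 : ((u : U) : V × W).2 = 0 := u.2
        ext
        · rfl
        · exact h2.symm
      map_add' := fun a b => by ext <;> simp
      map_smul' := fun c a => by ext <;> simp }
  have h1 : finrank K (U.comap (LinearMap.inl K V W)) = finrank K (LinearMap.ker φ) :=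
    e.finrank_eq
  have h2 := LinearMap.finrank_range_add_finrank_ker φ
  rw [hrange] at h2
  omega

theorem grassmannian_fibration (K V W : Type) [Field K]
    [AddCommGroup V] [Module K V] [AddCommGroup W] [Module K W]
    [FiniteDimensional K V] [FiniteDimensional K W] (r : ℕ) :
    (∀ U : Submodule K (V × W), finrank K U = r →
      finrank K (U.comap (LinearMap.inl K V W)) + finrank K (U.map (LinearMap.snd K V W)) = r) ∧
    (∀ (A : Submodule K V) (B : Submodule K W), finrank K A + finrank K B = r →
      Nonempty ({U : Submodule K (V × W) // finrank K U = r ∧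
          U.comap (LinearMap.inl K V W) = A ∧ U.map (LinearMap.snd K V W) = B} ≃
        (B →ₗ[K] V ⧸ A))) := by
  classical
  constructor
  · intro U hU
    rw [finrank_comap_add_map_aux U, hU]
  · intro A B hAB
    -- projection π : W →ₗ B with π ∘ subtype = id
    obtain ⟨π, hπ⟩ := B.subtype.exists_leftInverse_of_injective B.ker_subtype
    have hπb : ∀ b : B, π (b : W) = b := fun b => congrArg (fun g => g b) hπ
    -- the graph construction
    set Φsub : (B →ₗ[K] V ⧸ A) → Submodule K (V × W) := fun f =>
      LinearMap.ker (A.mkQ.comp (LinearMap.fst K V W) -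
        (f.comp π).comp (LinearMap.snd K V W)) ⊓ Submodule.prod ⊤ B with hΦsub
    have hmem : ∀ (f : B →ₗ[K] V ⧸ A) (v : V) (w : W),
        (v, w) ∈ Φsub f ↔ (A.mkQ v = f (π w) ∧ w ∈ B) := by
      intro f v w
      simp only [hΦsub, Submodule.mem_inf, LinearMap.mem_ker, LinearMap.sub_apply,
        LinearMap.comp_apply, LinearMap.fst_apply, LinearMap.snd_apply,
        Submodule.mem_prod, Submodule.mem_top, true_and, sub_eq_zero]
    -- properties
    have hcomapΦ : ∀ f, (Φsub f).comap (LinearMap.inl K V W) = A := by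
      intro f
      ext v
      simp only [Submodule.mem_comap, LinearMap.inl_apply]
      rw [hmem]
      simp [Submodule.mkQ_apply, Submodule.Quotient.mk_eq_zero]
    have hmapΦ : ∀ f, (Φsub f).map (LinearMap.snd K V W) = B := by
      intro f
      ext w
      simp only [Submodule.mem_map, LinearMap.snd_apply]
      constructor
      · rintro ⟨⟨v, w'⟩, hvw, rfl⟩
        exact ((hmem f v w').1 hvw).2
      · intro hw
        obtain ⟨v, hv⟩ := A.mkQ_surjective (f (π w))
        exact ⟨(v, w), (hmem f v w).2 ⟨hv, hw⟩, rfl⟩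
    have hrankΦ : ∀ f, finrank K (Φsub f) = r := by
      intro f
      have := finrank_comap_add_map_aux (Φsub f)
      rw [hcomapΦ f, hmapΦ f] at this
      omega
    set Φ : (B →ₗ[K] V ⧸ A) → {U : Submodule K (V × W) // finrank K U = r ∧
        U.comap (LinearMap.inl K V W) = A ∧ U.map (LinearMap.snd K V W) = B} :=
      fun f => ⟨Φsub f, hrankΦ f, hcomapΦ f, hmapΦ f⟩ with hΦ
    have hinj : Function.Injective Φ := by
      intro f f' hff
      have hUU : Φsub f = Φsub f' := congrArg Subtype.val hff
      ext b
      obtain ⟨v, hv⟩ := A.mkQ_surjective (f b)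
      have h1 : (v, (b : W)) ∈ Φsub f := (hmem f v b).2 ⟨by rw [hv, hπb], b.2⟩
      rw [hUU] at h1
      have h2 := ((hmem f' v b).1 h1).1
      rw [hπb] at h2
      rw [← hv, h2]
    have hsurj : Function.Surjective Φ := by
      rintro ⟨U, hr, hA, hB⟩
      -- projection from U to B
      have hpmem : ∀ u : U, ((u : V × W).2) ∈ B := by
        intro u
        rw [← hB]
        exact ⟨(u : V × W), u.2, rfl⟩
      set p : U →ₗ[K] B := LinearMap.codRestrict B
        ((LinearMap.snd K V W).comp U.subtype) hpmem with hp
      have hpsurj : LinearMap.range p = ⊤ := by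
        rw [LinearMap.range_eq_top]
        rintro ⟨b, hb⟩
        rw [← hB] at hb
        obtain ⟨u, hu, hub⟩ := hb
        exact ⟨⟨u, hu⟩, Subtype.ext hub⟩
      obtain ⟨s, hs⟩ := p.exists_rightInverse_of_surjective hpsurj
      have hsb : ∀ b : B, ((s b : V × W)).2 = (b : W) := by
        intro b
        have := congrArg (fun g => g b) hs
        simpa [hp, LinearMap.codRestrict] using congrArg Subtype.val this
      set f : B →ₗ[K] V ⧸ A := (A.mkQ.comp ((LinearMap.fst K V W).comp U.subtype)).comp s
        with hf
      have hfb : ∀ b : B, f b = A.mkQ ((s b : V × W)).1 := fun b => rfl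
      -- helper facts from hA
      have hAU : ∀ a ∈ A, ((a : V), (0 : W)) ∈ U := by
        intro a ha
        rw [← hA] at ha
        exact ha
      have hUA : ∀ v : V, ((v, (0 : W)) ∈ U) → v ∈ A := by
        intro v hv
        rw [← hA]
        exact hv
      refine ⟨f, ?_⟩
      rw [hΦ]
      refine Subtype.ext ?_
      show Φsub f = U
      apply le_antisymm
      · rintro ⟨v, w⟩ hvw
        obtain ⟨h1, hw⟩ := (hmem f v w).1 hvw
        set b : B := ⟨w, hw⟩ with hb
        have h2 : f b = A.mkQ ((s b : V × W)).1 := hfb b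
        rw [hπb b] at h1
        have h3 : v - ((s b : V × W)).1 ∈ A := by
          rw [← Submodule.Quotient.mk_eq_zero]
          have : A.mkQ (v - ((s b : V × W)).1) = 0 := by
            rw [map_sub, h1, h2, sub_self]
          simpa using this
        have h4 : ((v - ((s b : V × W)).1, (0 : W))) ∈ U := hAU _ h3
        have h5 : ((s b : V × W)) ∈ U := (s b).2
        have h6 := U.add_mem h4 h5
        have heq : (v - ((s b : V × W)).1, (0 : W)) + ((s b : V × W)) = (v, w) := by
          rw [Prod.ext_iff]
          constructor
          · simp
          · simp [hsb b]; rfl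
        rwa [heq] at h6
      · intro u hu
        have hw : u.2 ∈ B := by rw [← hB]; exact ⟨u, hu, rfl⟩
        set b : B := ⟨u.2, hw⟩ with hb
        have h5 : ((s b : V × W)) ∈ U := (s b).2
        have h4 : (u.1 - ((s b : V × W)).1, u.2 - ((s b : V × W)).2) ∈ U :=
          U.sub_mem hu h5
        rw [hsb b] at h4
        have h4' : (u.1 - ((s b : V × W)).1, (0 : W)) ∈ U := by
          simpa [hb] using h4
        have h3 : u.1 - ((s b : V × W)).1 ∈ A := hUA _ h4'
        have h1 : A.mkQ u.1 = f (π u.2) := by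
          rw [show π u.2 = b from hπb b, hfb b]
          have : A.mkQ (u.1 - ((s b : V × W)).1) = 0 := by
            rw [Submodule.mkQ_apply, Submodule.Quotient.mk_eq_zero]; exact h3
          rw [map_sub, sub_eq_zero] at this
          exact this
        exact (hmem f u.1 u.2).2 ⟨h1, hw⟩
    exact ⟨(Equiv.ofBijective Φ ⟨hinj, hsurj⟩).symm⟩
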